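/- Let F be a field, m, r, A, N natural numbers with 2 ≤ r, r + 1 ≤ m and N ≥ A + 1, and set T := ∑_{i=0}^{r−1} ⌊(m−r+i)/(i+1)⌋. Assume F has at least T + 1 elements ((T : Cardinal) < Cardinal.mk F). If H : Fin N → Submodule F (Fin m → F) is an injective family with finrank (H i) = r for every i, and for every submodule W of Fin m → F with finrank W = m − r the number of indices i with H i ⊓ W ≠ ⊥ is at most A (i.e. the family is an r-uniform weak (m−r, A) subspace design), then A ≥ T. -/

import Mathlib

open Module

section Aux

variable {F : Type*} [Field F] {D : Type*} [AddCommGroup D] [Module F D]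
  [FiniteDimensional F D]

/-- Intersection of a finite family of subspaces, each of codimension at most `k`,
has codimension at most `card * k`. -/
lemma aux_inf_finrank {ι : Type*} (P : ι → Submodule F D) (k : ℕ) (B : Finset ι)
    (hP : ∀ j ∈ B, finrank F D ≤ finrank F (P j) + k) :
    finrank F D ≤ finrank F (B.inf P : Submodule F D) + B.card * k := by
  classical
  induction B using Finset.induction_on with
  | empty => rw [Finset.inf_empty, finrank_top]; simp
  | @insert a B ha ih =>
    have h1 := Submodule.finrank_sup_add_finrank_inf_eq (P a) (B.inf P)
    have h2 : finrank F ((P a ⊔ B.inf P : Submodule F D)) ≤ finrank F D :=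
      Submodule.finrank_le _
    have h3 := ih (fun j hj => hP j (Finset.mem_insert_of_mem hj))
    have h4 := hP a (Finset.mem_insert_self a B)
    rw [Finset.inf_insert, Finset.card_insert_of_notMem ha, add_mul, one_mul]
    linarith

/-- The greedy lemma: in a space of dimension `r + s`, given subspaces `G j` of
dimension at least `s`, any subspace `U` of dimension `r - c` can be enlarged to a
subspace of dimension `r` meeting nontrivially any prescribed family of at most
`∑_{i<c} ⌈s/(i+1)⌉` of the `G j`'s. -/
lemma aux_greedy {ι : Type*} (r s : ℕ) (hD : finrank F D = r + s)
    (G : ι → Submodule F D) (hG : ∀ j, s ≤ finrank F (G j)) :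
    ∀ c : ℕ, ∀ U : Submodule F D, finrank F U + c = r →
      ∀ S : Finset ι, S.card ≤ ∑ i ∈ Finset.range c, (s + i) / (i + 1) →
      ∃ U' : Submodule F D, U ≤ U' ∧ finrank F U' = r ∧ ∀ j ∈ S, U' ⊓ G j ≠ ⊥ := by
  classical
  intro c
  induction c with
  | zero =>
    intro U hU S hS
    simp only [Finset.range_zero, Finset.sum_empty, Nat.le_zero, Finset.card_eq_zero] at hS
    exact ⟨U, le_rfl, by omega, by simp [hS]⟩
  | succ c ih =>
    intro U hU S hS
    set t := (s + c) / (c + 1) with ht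
    set A' := S.filter (fun j => G j ⊓ U = ⊥) with hA'
    obtain ⟨B, hBA, hBcard⟩ := Finset.exists_subset_card_eq (min_le_left A'.card t)
    set I := B.inf (fun j => G j ⊔ U) with hI
    have hUI : U ≤ I := Finset.le_inf fun j _ => le_sup_right
    have hcodim : ∀ j ∈ B, finrank F D ≤ finrank F ((G j ⊔ U : Submodule F D)) + (c + 1) := by
      intro j hj
      have hj' : G j ⊓ U = ⊥ := (Finset.mem_filter.mp (hBA hj)).2
      have h1 := Submodule.finrank_sup_add_finrank_inf_eq (G j) U
      rw [hj', finrank_bot] at h1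
      have h2 := hG j
      omega
    have hIrk := aux_inf_finrank _ (c + 1) B hcodim
    have hBt : B.card * (c + 1) ≤ s + c := by
      calc B.card * (c + 1) ≤ t * (c + 1) :=
            Nat.mul_le_mul_right _ (by omega)
        _ ≤ s + c := Nat.div_mul_le_self _ _
    have hIU : finrank F U < finrank F (I : Submodule F D) := by
      rw [hD] at hIrk
      linarith
    obtain ⟨u, huI, huU⟩ : ∃ u ∈ I, u ∉ U := by
      by_contra h
      push_neg at h
      exact absurd (Submodule.finrank_mono (fun x hx => h x hx : I ≤ U)) (not_le.mpr hIU)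
    have hu0 : u ≠ 0 := fun h => huU (h ▸ U.zero_mem)
    set U₁ := U ⊔ (F ∙ u) with hU₁
    have hUU₁ : U ≤ U₁ := le_sup_left
    have huU₁ : u ∈ U₁ := Submodule.mem_sup_right (Submodule.mem_span_singleton_self u)
    have hU₁rank : finrank F U₁ = finrank F U + 1 := by
      rw [hU₁]
      have hinf : U ⊓ (F ∙ u) = ⊥ := by
        rw [Submodule.eq_bot_iff]
        rintro x ⟨hxU, hxu⟩
        obtain ⟨a, rfl⟩ := Submodule.mem_span_singleton.mp hxu
        rcases eq_or_ne a 0 with rfl | ha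
        · simp
        · exact absurd (by simpa [smul_smul, inv_mul_cancel₀ ha] using U.smul_mem a⁻¹ hxU) huU
      have h1 := Submodule.finrank_sup_add_finrank_inf_eq U (F ∙ u)
      rw [hinf, finrank_bot, finrank_span_singleton hu0] at h1
      omega
    have hhit : ∀ j ∈ B, U₁ ⊓ G j ≠ ⊥ := by
      intro j hj
      have hmem : u ∈ G j ⊔ U := (Finset.inf_le hj : I ≤ G j ⊔ U) huI
      obtain ⟨g, hg, w, hw, hgw⟩ := Submodule.mem_sup.mp hmem
      have hg0 : g ≠ 0 := by
        rintro rfl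
        rw [zero_add] at hgw
        exact huU (hgw ▸ hw)
      have hgU₁ : g ∈ U₁ := by
        have : g = u - w := by rw [← hgw]; abel
        rw [this]
        exact sub_mem huU₁ (hUU₁ hw)
      exact (Submodule.ne_bot_iff _).mpr ⟨g, ⟨hgU₁, hg⟩, hg0⟩
    have hcard2 : (A' \ B).card ≤ ∑ i ∈ Finset.range c, (s + i) / (i + 1) := by
      have h1 : (A' \ B).card = A'.card - B.card := Finset.card_sdiff_of_subset hBA
      have h2 : A'.card ≤ S.card := Finset.card_filter_le _ _
      rw [Finset.sum_range_succ] at hS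
      omega
    obtain ⟨U', hU₁U', hrk, hhit'⟩ := ih U₁ (by omega) (A' \ B) hcard2
    refine ⟨U', hUU₁.trans hU₁U', hrk, ?_⟩
    intro j hjS
    by_cases hjA : j ∈ A'
    · by_cases hjB : j ∈ B
      · intro hbot
        exact hhit j hjB (le_bot_iff.mp (hbot ▸ inf_le_inf_right (G j) hU₁U'))
      · exact hhit' j (Finset.mem_sdiff.mpr ⟨hjA, hjB⟩)
    · have hnb : G j ⊓ U ≠ ⊥ := by
        simpa [hA', Finset.mem_filter, hjS] using hjA
      intro hbot
      apply hnb
      rw [← le_bot_iff] at hbot ⊢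
      exact le_trans (le_trans (le_of_eq (inf_comm _ _)) (inf_le_inf_right (G j) (hUU₁.trans hU₁U'))) hbot

end Aux

theorem stmt_10 (F : Type*) [Field F] (m r A N : ℕ) (hr : 2 ≤ r) (hrm : r + 1 ≤ m)
    (hN : A + 1 ≤ N)
    (hF : ((∑ i ∈ Finset.range r, (m - r + i) / (i + 1) : ℕ) : Cardinal) < Cardinal.mk F)
    (H : Fin N → Submodule F (Fin m → F))
    (hinj : Function.Injective H)
    (hrank : ∀ i, finrank F (H i) = r)
    (hweak : ∀ W : Submodule F (Fin m → F), finrank F W = m - r →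
      Set.ncard {i : Fin N | H i ⊓ W ≠ ⊥} ≤ A) :
    ∑ i ∈ Finset.range r, (m - r + i) / (i + 1) ≤ A := by
  classical
  by_contra hcon
  push_neg at hcon
  have hfV : finrank F (Fin m → F) = m := Module.finrank_fin_fun (R := F)
  have hfD : finrank F (Module.Dual F (Fin m → F)) = r + (m - r) := by
    rw [Subspace.dual_finrank_eq, hfV]; omega
  -- pick A+1 indices
  obtain ⟨S, -, hScard⟩ := Finset.exists_subset_card_eq
    (show A + 1 ≤ (Finset.univ : Finset (Fin N)).card by simp [hN])
  -- dual annihilators have dimension m - r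
  have hGrank : ∀ j : Fin N, m - r ≤ finrank F ((H j).dualAnnihilator) := by
    intro j
    have h1 : finrank F ((Fin m → F) ⧸ H j) = finrank F ((H j).dualAnnihilator) :=
      LinearEquiv.finrank_eq (Subspace.quotEquivAnnihilator (H j))
    have h2 := Submodule.finrank_quotient_add_finrank (H j)
    rw [hrank j, hfV] at h2
    omega
  obtain ⟨U', -, hU'rank, hU'hit⟩ :=
    aux_greedy r (m - r) hfD (fun j => (H j).dualAnnihilator) hGrank r ⊥
      (by simp) S (by omega)
  set W := U'.dualCoannihilator with hW
  have hWrank : finrank F W = m - r := by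
    have h1 := Subspace.finrank_add_finrank_dualCoannihilator_eq U'
    rw [← hW, hU'rank, hfV] at h1
    omega
  have key : ∀ j ∈ S, H j ⊓ W ≠ ⊥ := by
    intro j hj
    obtain ⟨φ, hφmem, hφ0⟩ := (Submodule.ne_bot_iff _).mp (hU'hit j hj)
    obtain ⟨hφU, hφG⟩ := Submodule.mem_inf.mp hφmem
    have hker : H j ⊔ W ≤ LinearMap.ker φ := by
      apply sup_le
      · intro x hx
        exact LinearMap.mem_ker.mpr ((Submodule.mem_dualAnnihilator φ).mp hφG x hx)
      · intro x hx
        exact LinearMap.mem_ker.mpr ((Submodule.mem_dualCoannihilator x).mp hx φ hφU)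
    have hkerlt : finrank F (LinearMap.ker φ) < m := by
      have hne : LinearMap.ker φ ≠ ⊤ := by rwa [Ne, LinearMap.ker_eq_top]
      have := Submodule.finrank_lt hne
      rwa [hfV] at this
    have hsum := Submodule.finrank_sup_add_finrank_inf_eq (H j) W
    have hsuple : finrank F ((H j ⊔ W : Submodule F (Fin m → F))) ≤
        finrank F (LinearMap.ker φ) := Submodule.finrank_mono hker
    rw [hrank j, hWrank] at hsum
    intro hbot
    rw [hbot, finrank_bot] at hsum
    omega
  have hle := hweak W hWrank
  have hsub : ↑S ⊆ {i : Fin N | H i ⊓ W ≠ ⊥} := fun j hj => key j hj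
  have hn := Set.ncard_le_ncard hsub (Set.toFinite _)
  rw [Set.ncard_coe_finset, hScard] at hn
  omega
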